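/- Let n, p ≥ 2 and let A₁, …, A_p and B₁, …, B_p be two families in GL_n(ℂ), each family having the same first n−1 columns (A_i e_k = A_j e_k and B_i e_k = B_j e_k for k ≤ n−1), with spec(A_i) = spec(B_i) (as multisets, i.e. equal characteristic polynomials) for every i, and ⋂_{i=1}^p spec(A_i) = ∅. Then there exists U ∈ GL_n(ℂ) such that B_i = U·A_i·U⁻¹ for every i. -/

import Mathlib

open Polynomial Matrix Module

noncomputable def stmt15Cmat (n : ℕ) (q : Polynomial ℂ) : Matrix (Fin n) (Fin n) ℂ :=
  Matrix.of fun r k => if (k : ℕ) = n - 1 then (X ^ n - q).coeff (r : ℕ)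
    else if (r : ℕ) = (k : ℕ) + 1 then 1 else 0

section
variable {n p : ℕ}

lemma stmt15_natDegree_lt {n : ℕ} (hn : 0 < n) (N : Matrix (Fin n) (Fin n) ℂ) :
    (X ^ n - N.charpoly).natDegree < n := by
  by_cases h0 : X ^ n - N.charpoly = 0
  · rw [h0]; simpa using hn
  · rw [Polynomial.natDegree_lt_iff_degree_lt h0]
    have hd : (X ^ n - N.charpoly).degree < (X ^ n : Polynomial ℂ).degree := by
      refine Polynomial.degree_sub_lt ?_ (pow_ne_zero n Polynomial.X_ne_zero) ?_
      · rw [Polynomial.degree_X_pow,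
          Polynomial.degree_eq_natDegree N.charpoly_monic.ne_zero,
          Matrix.charpoly_natDegree_eq_dim, Fintype.card_fin]
      · simp [Polynomial.leadingCoeff_X_pow, N.charpoly_monic.leadingCoeff]
    rwa [Polynomial.degree_X_pow] at hd

lemma stmt15_sum_mulVec {n : ℕ} {ι : Type*} (s : Finset ι) (f : ι → Matrix (Fin n) (Fin n) ℂ)
    (w : Fin n → ℂ) : (∑ i ∈ s, f i) *ᵥ w = ∑ i ∈ s, f i *ᵥ w := by
  induction s using Finset.cons_induction with
  | empty => simp
  | cons a s ha ih => simp [Finset.sum_cons, Matrix.add_mulVec, ih]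

lemma stmt15_CH {n : ℕ} (hn : 0 < n) (N : Matrix (Fin n) (Fin n) ℂ) (w : Fin n → ℂ) :
    (N ^ n) *ᵥ w = ∑ k ∈ Finset.range n, ((X ^ n - N.charpoly).coeff k) • ((N ^ k) *ᵥ w) := by
  have h1 : (N ^ n) = ∑ k ∈ Finset.range n, ((X ^ n - N.charpoly).coeff k) • (N ^ k) := by
    have h2 : aeval N (X ^ n - N.charpoly) = N ^ n := by
      rw [map_sub, Matrix.aeval_self_charpoly, sub_zero, aeval_X_pow]
    rw [← h2, Polynomial.aeval_eq_sum_range' (stmt15_natDegree_lt hn N)]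
  rw [h1, stmt15_sum_mulVec]
  exact Finset.sum_congr rfl fun k _ => Matrix.smul_mulVec _ _ _

lemma stmt15_eval_charpoly {n : ℕ} (M : Matrix (Fin n) (Fin n) ℂ) (μ : ℂ) :
    M.charpoly.eval μ = (μ • (1 : Matrix (Fin n) (Fin n) ℂ) - M).det := by
  rw [Matrix.charpoly, ← Polynomial.coe_evalRingHom, RingHom.map_det]
  congr 1
  ext i j
  by_cases h : i = j <;>
    simp [h, Matrix.charmatrix_apply_eq, Matrix.charmatrix_apply_ne, Matrix.one_apply]

lemma stmt15_mem_spectrum_iff {n : ℕ} (M : Matrix (Fin n) (Fin n) ℂ) (μ : ℂ) :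
    μ ∈ spectrum ℂ M ↔ M.charpoly.eval μ = 0 := by
  rw [spectrum.mem_iff, Algebra.algebraMap_eq_smul_one, Matrix.isUnit_iff_isUnit_det,
    isUnit_iff_ne_zero, not_not, stmt15_eval_charpoly]

lemma stmt15_mem_spectrum_of_eig {n : ℕ} (M : Matrix (Fin n) (Fin n) ℂ) {μ : ℂ}
    {x : Fin n → ℂ} (hx : x ≠ 0) (h : M *ᵥ x = μ • x) : μ ∈ spectrum ℂ M := by
  rw [stmt15_mem_spectrum_iff, stmt15_eval_charpoly]
  rw [← Matrix.exists_mulVec_eq_zero_iff]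
  refine ⟨x, hx, ?_⟩
  rw [Matrix.sub_mulVec, h]
  simp [Matrix.smul_mulVec]

lemma stmt15_levelt_aux (hn : 2 ≤ n) (hp : 0 < p)
    (M : Fin p → Matrix (Fin n) (Fin n) ℂ)
    (hM : ∀ i, IsUnit (M i))
    (hcols : ∀ i j : Fin p, ∀ k : Fin n, (k : ℕ) < n - 1 → ∀ r : Fin n, M i r k = M j r k)
    (hspec : ¬ ∃ μ : ℂ, ∀ i, μ ∈ spectrum ℂ (M i)) :
    ∃ P : Matrix (Fin n) (Fin n) ℂ, IsUnit P ∧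
      ∀ i, M i * P = P * stmt15Cmat n ((M i).charpoly) := by
  classical
  set i0 : Fin p := ⟨0, hp⟩ with hi0
  set lst : Fin n := ⟨n - 1, by omega⟩ with hlst
  set H : Submodule ℂ (Fin n → ℂ) := LinearMap.ker (LinearMap.proj (R := ℂ) (φ := fun _ : Fin n => ℂ) lst) with hH
  have mem_H : ∀ x : Fin n → ℂ, x ∈ H ↔ x lst = 0 := fun x => Iff.rfl
  -- agreement on H
  have agree : ∀ i j : Fin p, ∀ x ∈ H, M i *ᵥ x = M j *ᵥ x := by
    intro i j x hx
    funext r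
    show (fun s => M i r s) ⬝ᵥ x = (fun s => M j r s) ⬝ᵥ x
    unfold dotProduct
    refine Finset.sum_congr rfl fun k _ => ?_
    by_cases hk : (k : ℕ) < n - 1
    · show M i r k * x k = M j r k * x k
      rw [hcols i j k hk r]
    · have : k = lst := by ext; simp only [hlst]; omega
      rw [this, (mem_H x).1 hx, mul_zero, mul_zero]
  -- finrank facts
  have frV : finrank ℂ (Fin n → ℂ) = n := Module.finrank_fin_fun ℂ
  have frH : finrank ℂ H = n - 1 := by
    have hsurj : LinearMap.range (LinearMap.proj (R := ℂ) (φ := fun _ : Fin n => ℂ) lst) = ⊤ := by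
      rw [LinearMap.range_eq_top]
      intro c
      exact ⟨Pi.single lst c, by simp⟩
    have := LinearMap.finrank_range_add_finrank_ker
      (LinearMap.proj (R := ℂ) (φ := fun _ : Fin n => ℂ) lst)
    rw [hsurj, finrank_top, frV] at this
    have h1 : finrank ℂ ℂ = 1 := Module.finrank_self ℂ
    rw [h1, ← hH] at this
    omega
  -- the linear equivalence given by M i0
  have hMi0 := hM i0
  haveI : Invertible (M i0) := hMi0.invertible
  set e : (Fin n → ℂ) ≃ₗ[ℂ] (Fin n → ℂ) := (M i0).toLinearEquiv' ‹Invertible (M i0)› with he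
  have he_apply : ∀ x, e x = M i0 *ᵥ x := fun x => rfl
  -- the chain of subspaces
  set E : ℕ → Submodule ℂ (Fin n → ℂ) :=
    fun j => Nat.rec ⊤ (fun _ S => H ⊓ Submodule.comap (e : (Fin n → ℂ) →ₗ[ℂ] (Fin n → ℂ)) S) j
    with hE
  have hE0 : E 0 = ⊤ := rfl
  have hEsucc : ∀ j, E (j + 1) = H ⊓ Submodule.comap (e : (Fin n → ℂ) →ₗ[ℂ] (Fin n → ℂ)) (E j) :=
    fun j => rfl
  have frE : ∀ j, n ≤ finrank ℂ (E j) + j := by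
    intro j
    induction j with
    | zero =>
      have : finrank ℂ (E 0) = n := by rw [hE0]; rw [finrank_top]; exact frV
      omega
    | succ j ih =>
      rw [hEsucc j]
      set X := Submodule.comap (e : (Fin n → ℂ) →ₗ[ℂ] (Fin n → ℂ)) (E j) with hX
      have hXr : finrank ℂ X = finrank ℂ (E j) := by
        rw [hX, Submodule.comap_equiv_eq_map_symm]
        exact LinearEquiv.finrank_map_eq e.symm (E j)
      have hsum := Submodule.finrank_sup_add_finrank_inf_eq H X
      have hle := Submodule.finrank_le (H ⊔ X)
      omega
  -- pick a nonzero vector in E (n-1)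
  have hEbot : E (n - 1) ≠ ⊥ := by
    intro h
    have := frE (n - 1)
    rw [h, finrank_bot] at this
    omega
  obtain ⟨v, hvE, hv0⟩ := (Submodule.ne_bot_iff _).mp hEbot
  -- the iterates
  set g : ℕ → (Fin n → ℂ) := fun k => ((M i0) ^ k) *ᵥ v with hg
  have hg0 : g 0 = v := by simp [hg, Matrix.one_mulVec]
  have hgsucc : ∀ k, g (k + 1) = M i0 *ᵥ g k := by
    intro k
    rw [hg]
    show ((M i0) ^ (k + 1)) *ᵥ v = _
    rw [pow_succ', Matrix.mulVec_mulVec]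
  have hgE : ∀ k, k ≤ n - 1 → g k ∈ E (n - 1 - k) := by
    intro k
    induction k with
    | zero => intro _; simpa [hg0] using hvE
    | succ k ih =>
      intro hk
      have hk' : k ≤ n - 1 := by omega
      have h1 : g k ∈ E (n - 1 - k) := ih hk'
      have h2 : n - 1 - k = (n - 1 - (k + 1)) + 1 := by omega
      rw [h2, hEsucc] at h1
      have h3 := (Submodule.mem_inf.mp h1).2
      rw [Submodule.mem_comap] at h3
      rw [hgsucc, ← he_apply]
      exact h3
  have hgH : ∀ k, k ≤ n - 2 → g k ∈ H := by
    intro k hk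
    have h1 := hgE k (by omega)
    have h2 : n - 1 - k = (n - 2 - k) + 1 := by omega
    rw [h2, hEsucc] at h1
    exact (Submodule.mem_inf.mp h1).1
  -- key lemma : no nonzero invariant subspace inside H
  have keylem : ∀ S : Submodule ℂ (Fin n → ℂ), S ≠ ⊥ → S ≤ H →
      (∀ x ∈ S, M i0 *ᵥ x ∈ S) → False := by
    intro S hS0 hSH hSinv
    haveI : Nontrivial S := Submodule.nontrivial_iff_ne_bot.mpr hS0
    set f : Module.End ℂ S := ((M i0).mulVecLin).restrict
      (p := S) (q := S) (fun x hx => hSinv x hx) with hf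
    obtain ⟨μ, hμ⟩ := Module.End.exists_eigenvalue f
    obtain ⟨x, hx⟩ := hμ.exists_hasEigenvector
    have hx0 : (x : Fin n → ℂ) ≠ 0 := by
      simpa [Submodule.coe_eq_zero] using hx.right
    have hxeq : M i0 *ᵥ (x : Fin n → ℂ) = μ • (x : Fin n → ℂ) := by
      have h1 : ((f x : S) : Fin n → ℂ) = M i0 *ᵥ (x : Fin n → ℂ) := by
        rw [hf]
        rfl
      rw [← h1, hx.apply_eq_smul]
      rfl
    refine hspec ⟨μ, fun i => ?_⟩
    refine stmt15_mem_spectrum_of_eig (M i) hx0 ?_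
    rw [agree i i0 (x : Fin n → ℂ) (hSH x.2), hxeq]
  -- the dependence predicate and its minimal witness
  set Q : ℕ → Prop := fun m => g m ∈ Submodule.span ℂ (g '' Set.Iio m) with hQ
  have hQn : Q n := by
    rw [hQ]
    show ((M i0) ^ n) *ᵥ v ∈ _
    rw [stmt15_CH (by omega) (M i0) v]
    refine Submodule.sum_mem _ fun k hk => ?_
    refine Submodule.smul_mem _ _ (Submodule.subset_span ?_)
    exact ⟨k, Finset.mem_range.mp hk, rfl⟩
  have hQex : ∃ m, Q m := ⟨n, hQn⟩
  set m0 : ℕ := Nat.find hQex with hm0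
  have hm0Q : Q m0 := Nat.find_spec hQex
  have hm0le : m0 ≤ n := Nat.find_le hQn
  have hm0pos : 0 < m0 := by
    rcases Nat.eq_zero_or_pos m0 with h | h
    · exfalso
      have hq0 : Q 0 := h ▸ hm0Q
      rw [hQ] at hq0
      have : Set.Iio (0 : ℕ) = ∅ := by ext x; simp
      rw [this, Set.image_empty, Submodule.span_empty, Submodule.mem_bot, hg0] at hq0
      exact hv0 hq0
    · exact h
  have hm0n : m0 = n := by
    by_contra hne
    have hlt : m0 < n := lt_of_le_of_ne hm0le hne
    set S : Submodule ℂ (Fin n → ℂ) := Submodule.span ℂ (g '' Set.Iio m0) with hS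
    refine keylem S ?_ ?_ ?_
    · intro hbot
      have : v ∈ S := by
        rw [hS, ← hg0]
        exact Submodule.subset_span ⟨0, hm0pos, rfl⟩
      rw [hbot, Submodule.mem_bot] at this
      exact hv0 this
    · rw [hS, Submodule.span_le]
      rintro x ⟨k, hk, rfl⟩
      exact hgH k (by simp at hk; omega)
    · intro x hx
      rw [hS] at hx
      induction hx using Submodule.span_induction with
      | mem y hy =>
        obtain ⟨k, hk, rfl⟩ := hy
        simp only [Set.mem_Iio] at hk
        rw [← hgsucc k]
        rcases Nat.lt_or_ge (k + 1) m0 with h | h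
        · exact Submodule.subset_span ⟨k + 1, h, rfl⟩
        · have : k + 1 = m0 := by omega
          rw [this]
          exact hm0Q
      | zero => rw [Matrix.mulVec_zero]; exact Submodule.zero_mem _
      | add y z _ _ hy hz => rw [Matrix.mulVec_add]; exact Submodule.add_mem _ hy hz
      | smul c y _ hy =>
        rw [show M i0 *ᵥ (c • y) = c • (M i0 *ᵥ y) from (M i0).mulVecLin.map_smul c y]
        exact Submodule.smul_mem _ _ hy
  -- linear independence of the first n iterates
  have li : LinearIndependent ℂ (fun k : Fin n => g k) := by
    by_contra hli
    obtain ⟨c, hcsum, k1, hk1⟩ := Fintype.not_linearIndependent_iff.mp hli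
    set s : Finset (Fin n) := Finset.univ.filter (fun k => c k ≠ 0) with hs
    have hsne : s.Nonempty := ⟨k1, by simp [hs, hk1]⟩
    set k0 : Fin n := s.max' hsne with hk0
    have hk0mem : k0 ∈ s := s.max'_mem hsne
    have hck0 : c k0 ≠ 0 := by simpa [hs] using hk0mem
    have hQk0 : Q (k0 : ℕ) := by
      rw [hQ]
      have hsum0 : ∑ k ∈ s, c k • g k = 0 := by
        rw [← hcsum]
        exact Finset.sum_subset (Finset.filter_subset _ _)
          (fun k _ hk => by simp [hs] at hk; simp [hk])
      have heq : c k0 • g (k0 : ℕ) = - ∑ k ∈ s.erase k0, c k • g k := by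
        have := Finset.add_sum_erase s (fun k => c k • g k) hk0mem
        rw [hsum0] at this
        linear_combination (norm := module) this
      have hmem : c k0 • g (k0 : ℕ) ∈ Submodule.span ℂ (g '' Set.Iio (k0 : ℕ)) := by
        rw [heq]
        refine Submodule.neg_mem _ (Submodule.sum_mem _ fun k hk => ?_)
        refine Submodule.smul_mem _ _ (Submodule.subset_span ?_)
        have hkme : k ≠ k0 ∧ k ∈ s := Finset.mem_erase.mp hk
        have : (k : ℕ) < (k0 : ℕ) := by
          have hle := s.le_max' k hkme.2
          rw [← hk0] at hle
          exact lt_of_le_of_ne (by exact_mod_cast hle) (by simpa [Fin.ext_iff] using hkme.1)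
        exact ⟨k, this, rfl⟩
      have := Submodule.smul_mem _ (c k0)⁻¹ hmem
      rwa [inv_smul_smul₀ hck0] at this
    have := Nat.find_min hQex (m := (k0 : ℕ)) (by rw [← hm0, hm0n]; exact k0.isLt)
    exact this hQk0
  -- iterates under each M i agree with g
  have hpow : ∀ i : Fin p, ∀ k, k ≤ n - 1 → ((M i) ^ k) *ᵥ v = g k := by
    intro i k
    induction k with
    | zero => intro _; rw [hg0]; simp [Matrix.one_mulVec]
    | succ k ih =>
      intro hk
      rw [show M i ^ (k+1) = M i * M i ^ k from pow_succ' (M i) k,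
        ← Matrix.mulVec_mulVec, ih (by omega),
        agree i i0 (g k) (hgH k (by omega)), ← hgsucc]
  -- the matrix P of the basis
  set P : Matrix (Fin n) (Fin n) ℂ := Matrix.of (fun r k : Fin n => g (k : ℕ) r) with hP
  have hPunit : IsUnit P := by
    rw [← Matrix.linearIndependent_cols_iff_isUnit]
    have : (fun k : Fin n => Pᵀ k) = fun k : Fin n => g (k : ℕ) := by
      funext k r
      rfl
    show LinearIndependent ℂ (fun k : Fin n => Pᵀ k)
    rw [this]
    exact li
  refine ⟨P, hPunit, fun i => ?_⟩
  ext r j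
  have hlhs : (M i * P) r j = (M i *ᵥ g (j : ℕ)) r := by
    rw [Matrix.mul_apply]
    rfl
  rw [hlhs, Matrix.mul_apply]
  by_cases hj : (j : ℕ) < n - 1
  · -- shift column
    have h1 : M i *ᵥ g (j : ℕ) = g ((j : ℕ) + 1) := by
      rw [agree i i0 (g (j : ℕ)) (hgH (j : ℕ) (by omega)), ← hgsucc]
    set j1 : Fin n := ⟨(j : ℕ) + 1, by omega⟩ with hj1
    have h2 : ∀ s : Fin n, P r s * stmt15Cmat n ((M i).charpoly) s j
        = if s = j1 then g ((j1 : ℕ)) r else 0 := by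
      intro s
      by_cases hs : s = j1
      · subst hs
        simp [hP, stmt15Cmat, show ¬((j : ℕ) = n - 1) from by omega, hj1]
      · have hs' : ¬ ((s : ℕ) = (j : ℕ) + 1) := fun h => hs (Fin.ext h)
        simp [hP, stmt15Cmat, show ¬((j : ℕ) = n - 1) from by omega, hs', hs]
    rw [Finset.sum_congr rfl (fun s _ => h2 s), Finset.sum_ite_eq' Finset.univ j1
      (fun s => g ((j1 : Fin n) : ℕ) r), if_pos (Finset.mem_univ j1), h1]
  · -- last column, Cayley-Hamilton
    have hjl : (j : ℕ) = n - 1 := by omega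
    have h1 : M i *ᵥ g (j : ℕ) =
        ∑ k ∈ Finset.range n, ((X ^ n - (M i).charpoly).coeff k) • g k := by
      rw [hjl, ← hpow i (n - 1) le_rfl, Matrix.mulVec_mulVec,
        show M i * M i ^ (n - 1) = M i ^ n by rw [← pow_succ']; congr 1; omega,
        stmt15_CH (by omega) (M i) v]
      exact Finset.sum_congr rfl fun k hk => by rw [hpow i k (by simp at hk; omega)]
    rw [h1]
    have h2 : ∀ s : Fin n, P r s * stmt15Cmat n ((M i).charpoly) s j
        = ((X ^ n - (M i).charpoly).coeff (s : ℕ)) * g (s : ℕ) r := by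
      intro s
      simp only [stmt15Cmat, Matrix.of_apply, if_pos hjl, hP]
      ring
    rw [Finset.sum_congr rfl (fun s _ => h2 s)]
    have h3 := Fin.sum_univ_eq_sum_range
      (fun k => (((X ^ n - (M i).charpoly).coeff k • g k : Fin n → ℂ)) r) n
    rw [Finset.sum_apply, ← h3]
    exact Finset.sum_congr rfl fun s _ => by simp

end

theorem stmt_15 (n p : ℕ) (hn : 2 ≤ n) (hp : 2 ≤ p)
    (A B : Fin p → Matrix (Fin n) (Fin n) ℂ)
    (hA : ∀ i, IsUnit (A i)) (hB : ∀ i, IsUnit (B i))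
    (hAcols : ∀ i j : Fin p, ∀ k : Fin n, (k : ℕ) < n - 1 → ∀ r : Fin n, A i r k = A j r k)
    (hBcols : ∀ i j : Fin p, ∀ k : Fin n, (k : ℕ) < n - 1 → ∀ r : Fin n, B i r k = B j r k)
    (hchar : ∀ i, (A i).charpoly = (B i).charpoly)
    (hspec : ¬ ∃ μ : ℂ, ∀ i, μ ∈ spectrum ℂ (A i)) :
    ∃ U : Matrix (Fin n) (Fin n) ℂ, IsUnit U ∧ ∀ i, B i = U * A i * U⁻¹ := by
  have hp0 : 0 < p := by omega
  obtain ⟨P, hPu, hPc⟩ := stmt15_levelt_aux hn hp0 A hA hAcols hspec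
  have hspecB : ¬ ∃ μ : ℂ, ∀ i, μ ∈ spectrum ℂ (B i) := by
    intro ⟨μ, hμ⟩
    refine hspec ⟨μ, fun i => ?_⟩
    rw [stmt15_mem_spectrum_iff, hchar i, ← stmt15_mem_spectrum_iff]
    exact hμ i
  obtain ⟨W, hWu, hWc⟩ := stmt15_levelt_aux hn hp0 B hB hBcols hspecB
  have hPd : IsUnit P.det := (Matrix.isUnit_iff_isUnit_det P).mp hPu
  have hWd : IsUnit W.det := (Matrix.isUnit_iff_isUnit_det W).mp hWu
  have hPinv : IsUnit P⁻¹ := by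
    rw [Matrix.isUnit_nonsing_inv_iff]
    exact hPu
  refine ⟨W * P⁻¹, hWu.mul hPinv, fun i => ?_⟩
  have hUinv : (W * P⁻¹)⁻¹ = P * W⁻¹ := by
    rw [Matrix.mul_inv_rev, Matrix.nonsing_inv_nonsing_inv P hPd]
  rw [hUinv]
  have hC : P⁻¹ * A i * P = stmt15Cmat n ((A i).charpoly) := by
    rw [Matrix.mul_assoc, hPc i, ← Matrix.mul_assoc, Matrix.nonsing_inv_mul P hPd, Matrix.one_mul]
  have hBi : B i * W = W * stmt15Cmat n ((A i).charpoly) := by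
    rw [hWc i, hchar i]
  calc B i = B i * W * W⁻¹ := by rw [Matrix.mul_nonsing_inv_cancel_right _ _ hWd]
    _ = W * stmt15Cmat n ((A i).charpoly) * W⁻¹ := by rw [hBi]
    _ = W * (P⁻¹ * A i * P) * W⁻¹ := by rw [hC]
    _ = W * P⁻¹ * A i * (P * W⁻¹) := by simp only [Matrix.mul_assoc]
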